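/- Let {M_n(q)} be a sequence of real polynomials with M_0(q)=1, M_1(q)=t(q−r) for real constants t > 0 and r, and M_{n+1}(q) = a·M_n(q) + (bq+c)·M_{n−1}(q) for n ≥ 1, where a, b > 0, c ∈ ℝ, and r ≠ −c/b. Then for every n ≥ 1 the polynomial M_n(q) has only real zeros. -/

import Mathlib

open Polynomial

lemma splits_of_complex_roots_real (p : Polynomial ℝ)
    (h : ∀ z : ℂ, aeval z p = 0 → z.im = 0) : p.Splits := by
  by_cases hp : p = 0
  · simp [hp]
  set q : Polynomial ℂ := p.map (algebraMap ℝ ℂ) with hq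
  have hq0 : q ≠ 0 := by
    simpa [hq] using (Polynomial.map_ne_zero_iff (algebraMap ℝ ℂ).injective).2 hp
  have hsq : q.Splits := IsAlgClosed.splits q
  have hroots : ∀ ρ ∈ q.roots, (ρ.re : ℂ) = ρ := by
    intro ρ hρ
    have h0 : aeval ρ p = 0 := by
      have := (mem_roots hq0).1 hρ
      simpa [hq, aeval_def, eval_map, IsRoot] using this
    exact Complex.ext (by simp) (by simp [h ρ h0])
  -- factorization of q
  have hfac : q = C q.leadingCoeff * (q.roots.map fun ρ => X - C ρ).prod :=
    hsq.eq_prod_roots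
  rw [splits_iff_exists_multiset]
  refine ⟨q.roots.map Complex.re, ?_⟩
  apply Polynomial.map_injective (algebraMap ℝ ℂ) (algebraMap ℝ ℂ).injective
  have hlc : q.leadingCoeff = algebraMap ℝ ℂ p.leadingCoeff := by
    simp [hq, leadingCoeff_map_of_injective (algebraMap ℝ ℂ).injective]
  calc p.map (algebraMap ℝ ℂ) = q := by simp [hq]
    _ = C q.leadingCoeff * (q.roots.map fun ρ => X - C ρ).prod := hfac
    _ = _ := by
        rw [Polynomial.map_mul, map_C, ← hlc]
        congr 1
        rw [show Polynomial.map (algebraMap ℝ ℂ)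
              (Multiset.map (fun a : ℝ => X - C a) (Multiset.map Complex.re q.roots)).prod
            = ((Multiset.map (fun a : ℝ => X - C a) (Multiset.map Complex.re q.roots)).map
                (Polynomial.map (algebraMap ℝ ℂ))).prod from
          (mapRingHom (algebraMap ℝ ℂ)).map_multiset_prod _]
        rw [Multiset.map_map, Multiset.map_map]
        apply congrArg
        symm
        apply Multiset.map_congr rfl
        intro ρ hρ
        simp [Polynomial.map_sub, hroots ρ hρ]

lemma aux_im_neg (x : ℝ) (w : ℂ) (hx : 0 < x) (hw : 0 < w.im) : ((x : ℂ) / w).im < 0 := by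
  have hw0 : w ≠ 0 := by
    intro h; rw [h] at hw; simp at hw
  rw [div_eq_mul_inv]
  have hx' : ((x : ℂ) * w⁻¹).im = x * (w⁻¹).im := by simp [Complex.mul_im]
  rw [hx', Complex.inv_im]
  have hns : 0 < Complex.normSq w := Complex.normSq_pos.2 hw0
  have : -w.im / Complex.normSq w < 0 := div_neg_of_neg_of_pos (by linarith) hns
  exact mul_neg_of_pos_of_neg hx this

lemma aux_im_pos (x : ℝ) (w : ℂ) (hx : 0 < x) (hw : w.im < 0) : 0 < ((x : ℂ) / w).im := by
  have h := aux_im_neg x (-w) hx (by simp; linarith)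
  have : (x : ℂ) / (-w) = -((x : ℂ) / w) := by ring
  rw [this, Complex.neg_im] at h
  linarith

theorem type_zero_one_real_rooted (M : ℕ → Polynomial ℝ) (a b c t r : ℝ)
    (ht : 0 < t) (ha : 0 < a) (hb : 0 < b) (hr : r ≠ -c / b)
    (hM0 : M 0 = 1) (hM1 : M 1 = C t * (X - C r))
    (hrec : ∀ n ≥ 1, M (n + 1) = C a * M n + (C b * X + C c) * M (n - 1)) :
    ∀ n ≥ 1, (M n).Splits := by
  have hb0 : (b : ℂ) ≠ 0 := by exact_mod_cast hb.ne'
  set S : ℂ := -(c : ℂ) / (b : ℂ) with hS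
  have hSim : S.im = 0 := by
    rw [hS]; simp [Complex.div_im, Complex.neg_im, Complex.ofReal_im]
  have key : ∀ n, 1 ≤ n → ∀ z : ℂ, 0 < z.im →
      (aeval z (M (n - 1)) ≠ 0 ∧ aeval z (M n) ≠ 0) ∧
      (n % 2 = 1 → 0 < (aeval z (M n) / aeval z (M (n - 1))).im) ∧
      (n % 2 = 0 → (aeval z (M n) / ((z - S) * aeval z (M (n - 1)))).im < 0) := by
    intro n hn
    induction n, hn using Nat.le_induction with
    | base =>
      intro z hz
      have hA : aeval z (M 0) = 1 := by simp [hM0]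
      have hB : aeval z (M 1) = (t : ℂ) * (z - (r : ℂ)) := by
        simp [hM1]
      have him : ((t : ℂ) * (z - (r : ℂ))).im = t * z.im := by
        simp [Complex.mul_im]
      have hB0 : aeval z (M 1) ≠ 0 := by
        rw [hB]; intro h
        have := congrArg Complex.im h
        rw [him] at this; simp at this
        rcases this with h1 | h1
        · exact absurd h1 ht.ne'
        · exact absurd h1 hz.ne'
      refine ⟨⟨by simp [hA], hB0⟩, ?_, by omega⟩
      intro _
      rw [hA, hB, div_one, him]
      positivity
    | succ n hn ih =>
      intro z hz
      obtain ⟨⟨hA, hB⟩, hodd, heven⟩ := ih z hz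
      have hzS : (z - S).im = z.im := by simp [hSim]
      have hzS0 : z - S ≠ 0 := by
        intro h; rw [h] at hzS; simp at hzS; exact absurd hzS.symm hz.ne'
      have hrw : (b : ℂ) * z + (c : ℂ) = (b : ℂ) * (z - S) := by
        rw [hS]; field_simp; ring
      have Crec : aeval z (M (n + 1)) =
          (a : ℂ) * aeval z (M n) + ((b : ℂ) * (z - S)) * aeval z (M (n - 1)) := by
        rw [hrec n hn, ← hrw]
        simp [map_add, map_mul]
      simp only [Nat.add_sub_cancel]
      rcases Nat.even_or_odd n with hne | hno
      · -- n even, n+1 odd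
        have hn2 : n % 2 = 0 := Nat.even_iff.1 hne
        have hH := heven hn2
        set H : ℂ := aeval z (M n) / ((z - S) * aeval z (M (n - 1))) with hHdef
        have hH0 : H ≠ 0 := by intro h; rw [h] at hH; simp at hH
        have hiden : aeval z (M (n + 1)) / aeval z (M n) = (a : ℂ) + (b : ℂ) / H := by
          rw [Crec, hHdef]
          field_simp
          try ring
        have himv : 0 < ((a : ℂ) + (b : ℂ) / H).im := by
          have := aux_im_pos b H hb hH
          simpa using this
        have hnum : aeval z (M (n + 1)) ≠ 0 := by
          intro h
          rw [h, zero_div] at hiden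
          rw [← hiden] at himv
          simp at himv
        refine ⟨⟨hB, hnum⟩, ?_, by omega⟩
        intro _
        rw [hiden]; exact himv
      · -- n odd, n+1 even
        have hn2 : n % 2 = 1 := Nat.odd_iff.1 hno
        have hF := hodd hn2
        set F : ℂ := aeval z (M n) / aeval z (M (n - 1)) with hFdef
        have hF0 : F ≠ 0 := by intro h; rw [h] at hF; simp at hF
        have hiden : aeval z (M (n + 1)) / ((z - S) * aeval z (M n)) =
            (a : ℂ) / (z - S) + (b : ℂ) / F := by
          rw [Crec, hFdef]
          field_simp
          try ring
        have himv : ((a : ℂ) / (z - S) + (b : ℂ) / F).im < 0 := by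
          have h1 := aux_im_neg a (z - S) ha (by rw [hzS]; exact hz)
          have h2 := aux_im_neg b F hb hF
          simp only [Complex.add_im]
          linarith
        have hnum : aeval z (M (n + 1)) ≠ 0 := by
          intro h
          rw [h, zero_div] at hiden
          rw [← hiden] at himv
          simp at himv
        refine ⟨⟨hB, hnum⟩, by omega, ?_⟩
        intro _
        rw [hiden]; exact himv
  intro n hn
  apply splits_of_complex_roots_real
  intro z hzero
  by_contra him
  rcases lt_trichotomy z.im 0 with h | h | h
  · have hz' : 0 < (starRingEnd ℂ z).im := by rw [Complex.conj_im]; linarith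
    refine ((key n hn _ hz').1).2 ?_
    rw [aeval_conj, hzero, map_zero]
  · exact him h
  · exact ((key n hn z h).1).2 hzero
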